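/- For every bid vector b and every reserve vector r, the lazy revenue is at most the maximum of the eager revenue with reserves r and the eager revenue with all-zero reserves: RevL(b, r) ≤ max(RevE(b, r), RevE(b, 0)). Consequently RevL(b, r) ≤ RevE(b, r) + RevE(b, 0). -/

import Mathlib

open MeasureTheory Finset
open scoped Classical ENNReal

noncomputable def lazyWinner {n : ℕ} (b : Fin (n + 1) → ℝ) : Fin (n + 1) :=
  (Finset.univ.filter fun i => ∀ j, b j ≤ b i).min' (by
    obtain ⟨i, -, hi⟩ := Finset.exists_max_image Finset.univ b ⟨0, Finset.mem_univ 0⟩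
    exact ⟨i, Finset.mem_filter.mpr ⟨Finset.mem_univ i, fun j => hi j (Finset.mem_univ j)⟩⟩)

noncomputable def secondMax {n : ℕ} (b : Fin (n + 1) → ℝ) : ℝ :=
  (Finset.univ.erase (lazyWinner b)).fold max 0 b

/-- Revenue of the second price auction with lazy reserves. -/
noncomputable def lazyRev {n : ℕ} (b r : Fin (n + 1) → ℝ) : ℝ :=
  if r (lazyWinner b) ≤ b (lazyWinner b) then max (r (lazyWinner b)) (secondMax b) else 0

/-- The least-index bidder among those meeting their reserve attaining the highest bid. -/
noncomputable def eagerWinner {n : ℕ} (b r : Fin (n + 1) → ℝ)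
    (hS : (Finset.univ.filter fun i => r i ≤ b i).Nonempty) : Fin (n + 1) :=
  ((Finset.univ.filter fun i => r i ≤ b i).filter
      fun i => ∀ k ∈ Finset.univ.filter (fun i => r i ≤ b i), b k ≤ b i).min' (by
    obtain ⟨i, hi, hmax⟩ := Finset.exists_max_image _ b hS
    exact ⟨i, Finset.mem_filter.mpr ⟨hi, hmax⟩⟩)

/-- Revenue of the second price auction with eager reserves. -/
noncomputable def eagerRev {n : ℕ} (b r : Fin (n + 1) → ℝ) : ℝ :=
  if hS : (Finset.univ.filter fun i => r i ≤ b i).Nonempty then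
    max (r (eagerWinner b r hS))
      (((Finset.univ.filter fun i => r i ≤ b i).erase (eagerWinner b r hS)).fold max 0 b)
  else 0

lemma min'_congr'' {α : Type*} [LinearOrder α] {s t : Finset α} (h : s = t) (hs : s.Nonempty) :
    s.min' hs = t.min' (h ▸ hs) := by subst h; rfl

lemma fold_max_nonneg {α : Type*} (s : Finset α) (f : α → ℝ) : 0 ≤ s.fold max 0 f := by
  induction s using Finset.induction with
  | empty => simp
  | insert _ _ h ih => rw [Finset.fold_insert h]; exact le_trans ih (le_max_right _ _)

lemma lazyWinner_max {n : ℕ} (b : Fin (n + 1) → ℝ) : ∀ j, b j ≤ b (lazyWinner b) := by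
  have := Finset.min'_mem (Finset.univ.filter fun i => ∀ j, b j ≤ b i) (by
    obtain ⟨i, -, hi⟩ := Finset.exists_max_image Finset.univ b ⟨0, Finset.mem_univ 0⟩
    exact ⟨i, Finset.mem_filter.mpr ⟨Finset.mem_univ i, fun j => hi j (Finset.mem_univ j)⟩⟩)
  exact (Finset.mem_filter.mp this).2

lemma eagerRev_zero {n : ℕ} (b : Fin (n + 1) → ℝ) (hb : ∀ i, 0 ≤ b i) :
    eagerRev b 0 = secondMax b := by
  have hfilt0 : (Finset.univ.filter fun i => (0 : Fin (n+1) → ℝ) i ≤ b i) = Finset.univ :=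
    Finset.filter_true_of_mem (fun i _ => by simpa using hb i)
  have hS0 : (Finset.univ.filter fun i => (0 : Fin (n+1) → ℝ) i ≤ b i).Nonempty := by
    rw [hfilt0]; exact Finset.univ_nonempty
  have hsets : ((Finset.univ.filter fun i => (0 : Fin (n+1) → ℝ) i ≤ b i).filter
      fun i => ∀ k ∈ Finset.univ.filter (fun i => (0 : Fin (n+1) → ℝ) i ≤ b i), b k ≤ b i)
      = (Finset.univ.filter fun i => ∀ j, b j ≤ b i) := by
    ext i
    simp [hb]
  have hE0 : eagerWinner b 0 hS0 = lazyWinner b := by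
    unfold eagerWinner lazyWinner
    exact min'_congr'' hsets _
  rw [eagerRev, dif_pos hS0, hE0, hfilt0, Pi.zero_apply]
  exact max_eq_right (fold_max_nonneg _ _)

theorem lazy_le_max_eager {n : ℕ} (b r : Fin (n + 1) → ℝ)
    (hb : ∀ i, 0 ≤ b i) (hr : ∀ i, 0 ≤ r i) :
    lazyRev b r ≤ max (eagerRev b r) (eagerRev b 0) ∧
    lazyRev b r ≤ eagerRev b r + eagerRev b 0 := by
  have h0 : eagerRev b 0 = secondMax b := eagerRev_zero b hb
  have h0nn : 0 ≤ eagerRev b 0 := h0 ▸ fold_max_nonneg _ _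
  have hrnn : 0 ≤ eagerRev b r := by
    rw [eagerRev]
    split
    · exact le_trans (hr _) (le_max_left _ _)
    · exact le_refl 0
  set w := lazyWinner b with hw
  have key : lazyRev b r ≤ max (eagerRev b r) (eagerRev b 0) := by
    rw [lazyRev]
    split
    case isFalse => exact le_trans h0nn (le_max_right _ _)
    case isTrue hrw =>
      have hwS : w ∈ Finset.univ.filter fun i => r i ≤ b i :=
        Finset.mem_filter.mpr ⟨Finset.mem_univ w, hrw⟩
      have hS : (Finset.univ.filter fun i => r i ≤ b i).Nonempty := ⟨w, hwS⟩
      have hwmax := lazyWinner_max b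
      -- eagerWinner = w
      have hjw : eagerWinner b r hS = w := by
        have hwE : w ∈ (Finset.univ.filter fun i => r i ≤ b i).filter
            (fun i => ∀ k ∈ Finset.univ.filter (fun i => r i ≤ b i), b k ≤ b i) :=
          Finset.mem_filter.mpr ⟨hwS, fun k _ => hwmax k⟩
        have hle : eagerWinner b r hS ≤ w := Finset.min'_le _ _ hwE
        have hjE := Finset.min'_mem ((Finset.univ.filter fun i => r i ≤ b i).filter
            (fun i => ∀ k ∈ Finset.univ.filter (fun i => r i ≤ b i), b k ≤ b i)) (by
          obtain ⟨i, hi, hmax⟩ := Finset.exists_max_image _ b hS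
          exact ⟨i, Finset.mem_filter.mpr ⟨hi, hmax⟩⟩)
        obtain ⟨hjS, hjmax⟩ := Finset.mem_filter.mp hjE
        have hbj : ∀ i, b i ≤ b (eagerWinner b r hS) := by
          intro i
          exact le_trans (hwmax i) (hjmax w hwS)
        have hjA : eagerWinner b r hS ∈ Finset.univ.filter fun i => ∀ j, b j ≤ b i :=
          Finset.mem_filter.mpr ⟨Finset.mem_univ _, hbj⟩
        have hge : w ≤ eagerWinner b r hS := Finset.min'_le _ _ hjA
        exact le_antisymm hle hge
      have hre : r w ≤ eagerRev b r := by
        rw [eagerRev, dif_pos hS, hjw]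
        exact le_max_left _ _
      exact max_le (le_trans hre (le_max_left _ _))
        (le_trans (le_of_eq h0.symm) (le_max_right _ _))
  refine ⟨key, le_trans key (max_le ?_ ?_)⟩
  · exact le_add_of_nonneg_right h0nn
  · exact le_add_of_nonneg_left hrnn
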